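/- Let G be a digraph and C a vertex set such that for every vertex u ∈ C, there is no 1-edge-out or 1-edge-in component of u in G[C] with at most Δ edges. Then one of the following holds: (a) G[C] is 2-edge-connected; (b) there exist two disjoint vertex sets A, B ⊂ C each inducing more than Δ edges that lie in different strongly connected components of G[C]; (c) G[C] is strongly connected and for every strong bridge e of G[C] there exist two disjoint vertex sets A, B ⊂ C each inducing more than Δ edges that are disconnected from each other in G[C] \ e. -/

import Mathlib

variable {V : Type*} [DecidableEq V]

/-- Edges from `S` to `C \ S` (outgoing edges of `S` in the subgraph induced by `C`). -/
def outEdges (E : Finset (V × V)) (C S : Finset V) : Finset (V × V) :=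
  E.filter (fun e => e.1 ∈ S ∧ e.2 ∈ C ∧ e.2 ∉ S)

/-- Edges from `C \ S` to `S` (incoming edges of `S` in the subgraph induced by `C`). -/
def inEdges (E : Finset (V × V)) (C S : Finset V) : Finset (V × V) :=
  E.filter (fun e => e.1 ∈ C ∧ e.1 ∉ S ∧ e.2 ∈ S)

/-- Edges of the subgraph induced by `S`. -/
def innerEdges (E : Finset (V × V)) (S : Finset V) : Finset (V × V) :=
  E.filter (fun e => e.1 ∈ S ∧ e.2 ∈ S)

/-- `S` is a 1-edge-out component of `u` in `G[C]` containing at most `Δ` edges. -/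
def IsSmallOneEdgeOut (E : Finset (V × V)) (C S : Finset V) (u : V) (Δ : ℕ) : Prop :=
  S ⊆ C ∧ u ∈ S ∧ (outEdges E C S).card ≤ 1 ∧
    (∀ S' : Finset V, S' ⊂ S → u ∈ S' → 1 < (outEdges E C S').card) ∧
    (innerEdges E S).card ≤ Δ

/-- `S` is a 1-edge-in component of `u` in `G[C]` containing at most `Δ` edges. -/
def IsSmallOneEdgeIn (E : Finset (V × V)) (C S : Finset V) (u : V) (Δ : ℕ) : Prop :=
  S ⊆ C ∧ u ∈ S ∧ (inEdges E C S).card ≤ 1 ∧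
    (∀ S' : Finset V, S' ⊂ S → u ∈ S' → 1 < (inEdges E C S').card) ∧
    (innerEdges E S).card ≤ Δ

/-- Reachability by a path staying inside the vertex set `C`. -/
def ReachIn (E : Finset (V × V)) (C : Finset V) (a b : V) : Prop :=
  Relation.ReflTransGen (fun p q => p ∈ C ∧ q ∈ C ∧ (p, q) ∈ E) a b

/-- The subgraph induced by `C` is strongly connected. -/
def StronglyConnIn (E : Finset (V × V)) (C : Finset V) : Prop :=
  ∀ a ∈ C, ∀ b ∈ C, ReachIn E C a b

lemma reachIn_mem_right {E : Finset (V × V)} {C : Finset V} {a b : V}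
    (h : ReachIn E C a b) (ha : a ∈ C) : b ∈ C := by
  induction h with
  | refl => exact ha
  | tail _ step _ => exact step.2.1

lemma reachIn_mono {E E' : Finset (V × V)} {C : Finset V} {a b : V} (hE : E ⊆ E')
    (h : ReachIn E C a b) : ReachIn E' C a b := by
  induction h with
  | refl => exact Relation.ReflTransGen.refl
  | tail _ step ih => exact ih.tail ⟨step.1, step.2.1, hE step.2.2⟩

lemma out_reach_subset (E E' : Finset (V × V)) (hE' : E' ⊆ E) (C : Finset V) (a : V)
    [DecidablePred (ReachIn E' C a)] :
    outEdges E C (C.filter (fun v => ReachIn E' C a v)) ⊆ E \ E' := by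
  intro p hp
  simp only [outEdges, Finset.mem_filter] at hp
  obtain ⟨hpE, h1, h2, h3⟩ := hp
  rw [Finset.mem_sdiff]
  refine ⟨hpE, fun hmem => h3 ?_⟩
  exact ⟨h2, Relation.ReflTransGen.tail h1.2 ⟨h1.1, h2, hmem⟩⟩

lemma in_reach_subset (E E' : Finset (V × V)) (hE' : E' ⊆ E) (C : Finset V) (b : V)
    [DecidablePred (fun v => ReachIn E' C v b)] :
    inEdges E C (C.filter (fun v => ReachIn E' C v b)) ⊆ E \ E' := by
  intro p hp
  simp only [inEdges, Finset.mem_filter] at hp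
  obtain ⟨hpE, h1, h2, h3⟩ := hp
  rw [Finset.mem_sdiff]
  refine ⟨hpE, fun hmem => h2 ?_⟩
  have hr : ReachIn E' C p.1 b := Relation.ReflTransGen.head ⟨h1, h3.1, hmem⟩ h3.2
  exact ⟨h1, hr⟩

lemma exists_big_out (E : Finset (V × V)) (C : Finset V) (Δ : ℕ)
    (h : ∀ u ∈ C, ∀ S : Finset V,
      ¬ IsSmallOneEdgeOut E C S u Δ ∧ ¬ IsSmallOneEdgeIn E C S u Δ)
    {a : V} {Sa : Finset V} (ha : a ∈ Sa) (hSa : Sa ⊆ C)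
    (hout : (outEdges E C Sa).card ≤ 1) :
    ∃ A : Finset V, A ⊆ Sa ∧ a ∈ A ∧ Δ < (innerEdges E A).card := by
  classical
  set T := (Sa.powerset).filter (fun S => a ∈ S ∧ (outEdges E C S).card ≤ 1) with hTdef
  have hT : Sa ∈ T := by
    simp only [hTdef, Finset.mem_filter, Finset.mem_powerset]
    exact ⟨Finset.Subset.refl _, ha, hout⟩
  obtain ⟨A, hAT, hmin⟩ : ∃ M ∈ T, ∀ x ∈ T, ¬ x < M := by
    obtain ⟨M, hM⟩ := Finset.exists_minimal (s := T) ⟨Sa, hT⟩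
    exact ⟨M, hM.1, fun x hx hlt => lt_irrefl _ (lt_of_lt_of_le hlt (hM.2 hx hlt.le))⟩
  simp only [hTdef, Finset.mem_filter, Finset.mem_powerset] at hAT
  obtain ⟨hASa, haA, hAout⟩ := hAT
  refine ⟨A, hASa, haA, ?_⟩
  by_contra hle
  push_neg at hle
  refine (h a (hSa ha) A).1 ⟨hASa.trans hSa, haA, hAout, fun S' hS' haS' => ?_, hle⟩
  by_contra hc
  push_neg at hc
  refine hmin S' ?_ hS'
  simp only [hTdef, Finset.mem_filter, Finset.mem_powerset]
  exact ⟨hS'.subset.trans hASa, haS', hc⟩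

lemma exists_big_in (E : Finset (V × V)) (C : Finset V) (Δ : ℕ)
    (h : ∀ u ∈ C, ∀ S : Finset V,
      ¬ IsSmallOneEdgeOut E C S u Δ ∧ ¬ IsSmallOneEdgeIn E C S u Δ)
    {b : V} {Tb : Finset V} (hb : b ∈ Tb) (hTb : Tb ⊆ C)
    (hin : (inEdges E C Tb).card ≤ 1) :
    ∃ B : Finset V, B ⊆ Tb ∧ b ∈ B ∧ Δ < (innerEdges E B).card := by
  classical
  set T := (Tb.powerset).filter (fun S => b ∈ S ∧ (inEdges E C S).card ≤ 1) with hTdef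
  have hT : Tb ∈ T := by
    simp only [hTdef, Finset.mem_filter, Finset.mem_powerset]
    exact ⟨Finset.Subset.refl _, hb, hin⟩
  obtain ⟨B, hBT, hmin⟩ : ∃ M ∈ T, ∀ x ∈ T, ¬ x < M := by
    obtain ⟨M, hM⟩ := Finset.exists_minimal (s := T) ⟨Tb, hT⟩
    exact ⟨M, hM.1, fun x hx hlt => lt_irrefl _ (lt_of_lt_of_le hlt (hM.2 hx hlt.le))⟩
  simp only [hTdef, Finset.mem_filter, Finset.mem_powerset] at hBT
  obtain ⟨hBTb, hbB, hBin⟩ := hBT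
  refine ⟨B, hBTb, hbB, ?_⟩
  by_contra hle
  push_neg at hle
  refine (h b (hTb hb) B).2 ⟨hBTb.trans hTb, hbB, hBin, fun S' hS' hbS' => ?_, hle⟩
  by_contra hc
  push_neg at hc
  refine hmin S' ?_ hS'
  simp only [hTdef, Finset.mem_filter, Finset.mem_powerset]
  exact ⟨hS'.subset.trans hBTb, hbS', hc⟩

/-- Main construction: given `a, b ∈ C` not connected via edges in `E'` (`E'` almost `E`),
produce the two large disjoint sets. -/
lemma main_construction (E E' : Finset (V × V)) (C : Finset V) (Δ : ℕ)
    (h : ∀ u ∈ C, ∀ S : Finset V,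
      ¬ IsSmallOneEdgeOut E C S u Δ ∧ ¬ IsSmallOneEdgeIn E C S u Δ)
    (hE' : E' ⊆ E) (hcard : (E \ E').card ≤ 1)
    {a b : V} (haC : a ∈ C) (hbC : b ∈ C) (hab : ¬ ReachIn E' C a b) :
    ∃ A B : Finset V, A ⊆ C ∧ B ⊆ C ∧ Disjoint A B ∧
      Δ < (innerEdges E A).card ∧ Δ < (innerEdges E B).card ∧
      ∀ a' ∈ A, ∀ b' ∈ B,
        ¬ (ReachIn E' C a' b' ∧ ReachIn E' C b' a') := by
  classical
  set Sa := C.filter (fun v => ReachIn E' C a v) with hSadef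
  set Tb := C.filter (fun v => ReachIn E' C v b) with hTbdef
  have haSa : a ∈ Sa := Finset.mem_filter.mpr ⟨haC, Relation.ReflTransGen.refl⟩
  have hbTb : b ∈ Tb := Finset.mem_filter.mpr ⟨hbC, Relation.ReflTransGen.refl⟩
  have hSaC : Sa ⊆ C := Finset.filter_subset _ _
  have hTbC : Tb ⊆ C := Finset.filter_subset _ _
  have hout : (outEdges E C Sa).card ≤ 1 :=
    le_trans (Finset.card_le_card (out_reach_subset E E' hE' C a)) hcard
  have hin : (inEdges E C Tb).card ≤ 1 :=
    le_trans (Finset.card_le_card (in_reach_subset E E' hE' C b)) hcard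
  obtain ⟨A, hASa, haA, hAbig⟩ := exists_big_out E C Δ h haSa hSaC hout
  obtain ⟨B, hBTb, hbB, hBbig⟩ := exists_big_in E C Δ h hbTb hTbC hin
  have hAreach : ∀ x ∈ A, ReachIn E' C a x := fun x hx =>
    (Finset.mem_filter.mp (hASa hx)).2
  have hBreach : ∀ x ∈ B, ReachIn E' C x b := fun x hx =>
    (Finset.mem_filter.mp (hBTb hx)).2
  refine ⟨A, B, hASa.trans hSaC, hBTb.trans hTbC, ?_, hAbig, hBbig, ?_⟩
  · rw [Finset.disjoint_left]
    intro x hxA hxB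
    exact hab ((hAreach x hxA).trans (hBreach x hxB))
  · intro a' ha' b' hb' ⟨hr, _⟩
    exact hab (((hAreach a' ha').trans hr).trans (hBreach b' hb'))

theorem stmt7 (E : Finset (V × V)) (C : Finset V) (Δ : ℕ) (hΔ : 0 < Δ)
    (h : ∀ u ∈ C, ∀ S : Finset V,
      ¬ IsSmallOneEdgeOut E C S u Δ ∧ ¬ IsSmallOneEdgeIn E C S u Δ) :
    -- (a) G[C] is 2-edge-connected
    (StronglyConnIn E C ∧
        ∀ e ∈ innerEdges E C, StronglyConnIn (E.erase e) C) ∨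
    -- (b) two large sets in different strongly connected components of G[C]
    (∃ A B : Finset V, A ⊆ C ∧ B ⊆ C ∧ Disjoint A B ∧
        Δ < (innerEdges E A).card ∧ Δ < (innerEdges E B).card ∧
        ∀ a ∈ A, ∀ b ∈ B, ¬ (ReachIn E C a b ∧ ReachIn E C b a)) ∨
    -- (c) G[C] strongly connected and every strong bridge separates two large sets
    (StronglyConnIn E C ∧
      ∀ e ∈ innerEdges E C, ¬ StronglyConnIn (E.erase e) C →
        ∃ A B : Finset V, A ⊆ C ∧ B ⊆ C ∧ Disjoint A B ∧
          Δ < (innerEdges E A).card ∧ Δ < (innerEdges E B).card ∧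
          ∀ a ∈ A, ∀ b ∈ B,
            ¬ (ReachIn (E.erase e) C a b ∧ ReachIn (E.erase e) C b a)) := by
  classical
  by_cases hsc : StronglyConnIn E C
  · by_cases h2 : ∀ e ∈ innerEdges E C, StronglyConnIn (E.erase e) C
    · exact Or.inl ⟨hsc, h2⟩
    · refine Or.inr (Or.inr ⟨hsc, fun e he hne => ?_⟩)
      unfold StronglyConnIn at hne
      push_neg at hne
      obtain ⟨a, haC, b, hbC, hab⟩ := hne
      have hsub : E.erase e ⊆ E := Finset.erase_subset _ _
      have hcard : (E \ E.erase e).card ≤ 1 := by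
        refine le_trans (Finset.card_le_card (fun x hx => ?_)) (Finset.card_singleton e).le
        rw [Finset.mem_sdiff, Finset.mem_erase] at hx
        simp only [Finset.mem_singleton]
        by_contra hxe
        exact hx.2 ⟨hxe, hx.1⟩
      exact main_construction E (E.erase e) C Δ h hsub hcard haC hbC hab
  · refine Or.inr (Or.inl ?_)
    unfold StronglyConnIn at hsc
    push_neg at hsc
    obtain ⟨a, haC, b, hbC, hab⟩ := hsc
    have hcard : (E \ E).card ≤ 1 := by simp
    exact main_construction E E C Δ h (Finset.Subset.refl _) hcard haC hbC hab
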